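/- arXiv:1712.02450 — 2 statements merged into one kernel-verified Lean document; each statement's English description precedes it below -/
import Mathlib

section
/- Let H and K be Hilbert C*-modules over a C*-algebra A and let T : H → K be an adjointable map. Then T is surjective if and only if T* is bounded below in norm, i.e., there exists m > 0 such that ‖T*y‖ ≥ m‖y‖ for all y ∈ K. -/
/-- The December 2024 Mathlib `CStarModule` (right `Aᵐᵒᵖ`-action), restated verbatim
under a new name because Mathlib's `CStarModule` now uses a left `A`-action. -/
class CStarModuleOld (A : outParam <| Type*) (E : Type*) [NonUnitalSemiring A] [StarRing A]
    [Module ℂ A] [AddCommGroup E] [Module ℂ E] [PartialOrder A] [SMul Aᵐᵒᵖ E] [Norm A] [Norm E]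
    extends Inner A E where
  inner_add_right {x} {y} {z} : inner x (y + z) = inner x y + inner x z
  inner_self_nonneg {x} : 0 ≤ inner x x
  inner_self {x} : inner x x = 0 ↔ x = 0
  inner_op_smul_right {a : A} {x y : E} : inner x (MulOpposite.op a • y) = inner x y * a
  inner_smul_right_complex {z : ℂ} {x} {y} : inner x (z • y) = z • inner x y
  star_inner x y : star (inner x y) = inner y x
  norm_eq_sqrt_norm_inner_self x : ‖x‖ = √‖inner x x‖

namespace CStarModuleOld

variable {A E : Type*} [NonUnitalCStarAlgebra A] [PartialOrder A] [StarOrderedRing A]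
  [NormedAddCommGroup E] [NormedSpace ℂ E] [SMul Aᵐᵒᵖ E] [CStarModuleOld A E]

theorem inner_zero_right' {x : E} : (inner A x (0 : E) : A) = 0 := by
  have := inner_smul_right_complex (A := A) (z := (0 : ℂ)) (x := x) (y := (0 : E))
  simpa using this

theorem inner_zero_left' {x : E} : (inner A (0 : E) x : A) = 0 := by
  rw [← star_inner x, inner_zero_right', star_zero]

theorem inner_add_left' {x y z : E} : (inner A (x + y) z : A) = inner A x z + inner A y z := by
  rw [← star_inner z, inner_add_right, star_add, star_inner, star_inner]

theorem inner_op_smul_left' {a : A} {x y : E} :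
    (inner A (MulOpposite.op a • x) y : A) = star a * inner A x y := by
  rw [← star_inner y, inner_op_smul_right, star_mul, star_inner]

theorem inner_smul_left_complex' {z : ℂ} {x y : E} :
    (inner A (z • x) y : A) = star z • inner A x y := by
  rw [← star_inner y, inner_smul_right_complex, star_smul, star_inner]

@[simp]
theorem inner_sub_right' {x y z : E} : (inner A x (y - z) : A) = inner A x y - inner A x z := by
  rw [sub_eq_add_neg, ← neg_one_smul ℂ z, inner_add_right, inner_smul_right_complex, neg_one_smul,
    ← sub_eq_add_neg]

theorem inner_sub_left' {x y z : E} : (inner A (x - y) z : A) = inner A x z - inner A y z := by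
  rw [← star_inner z, inner_sub_right', star_sub, star_inner, star_inner]

@[simp]
theorem inner_smul_right_complex' {z : ℂ} {x y : E} :
    (inner A x (z • y) : A) = z • inner A x y := inner_smul_right_complex

theorem inner_smul_right_real' {r : ℝ} {x y : E} : (inner A x (r • y) : A) = r • inner A x y := by
  have h₁ : r • y = (r : ℂ) • y := by simp
  rw [h₁, inner_smul_right_complex]
  simp

theorem inner_smul_left_real' {r : ℝ} {x y : E} : (inner A (r • x) y : A) = r • inner A x y := by
  have h₁ : r • x = (r : ℂ) • x := by simp
  rw [h₁, inner_smul_left_complex']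
  simp

theorem norm_sq_eq {x : E} : ‖x‖ ^ 2 = ‖(inner A x x : A)‖ := by
  rw [norm_eq_sqrt_norm_inner_self (A := A) x, Real.sq_sqrt (norm_nonneg _)]

theorem inner_mul_inner_swap_le' {x y : E} :
    (inner A y x : A) * inner A x y ≤ ‖x‖ ^ 2 • (inner A y y : A) := by
  rcases eq_or_ne x 0 with h | h
  · subst h
    simp [inner_zero_right', inner_zero_left']
  · have hx : 0 < ‖x‖ := norm_pos_iff.mpr h
    have h₁ : ∀ a : A, (0 : A) ≤ ‖x‖ ^ 2 • (star a * a) - ‖x‖ ^ 2 • (star a * inner A x y)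
        - ‖x‖ ^ 2 • (inner A y x * a) + ‖x‖ ^ 2 • (‖x‖ ^ 2 • (inner A y y : A)) := fun a => by
      calc (0 : A) ≤ inner A (MulOpposite.op a • x - ‖x‖ ^ 2 • y)
              (MulOpposite.op a • x - ‖x‖ ^ 2 • y) := inner_self_nonneg
        _ = star a * inner A x x * a - ‖x‖ ^ 2 • (star a * inner A x y)
              - ‖x‖ ^ 2 • (inner A y x * a) + ‖x‖ ^ 2 • (‖x‖ ^ 2 • (inner A y y : A)) := by
            simp only [inner_sub_right', inner_op_smul_right, inner_sub_left',
              inner_op_smul_left', inner_smul_left_real', inner_smul_right_real', smul_sub,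
              mul_smul_comm, smul_mul_assoc, mul_assoc, sub_mul, add_mul]
            abel
        _ ≤ ‖x‖ ^ 2 • (star a * a) - ‖x‖ ^ 2 • (star a * inner A x y)
              - ‖x‖ ^ 2 • (inner A y x * a) + ‖x‖ ^ 2 • (‖x‖ ^ 2 • (inner A y y : A)) := by
            gcongr
            calc star a * inner A x x * a ≤ ‖(inner A x x : A)‖ • (star a * a) :=
                  CStarAlgebra.star_left_conjugate_le_norm_smul (star_inner x x)
              _ = ‖x‖ ^ 2 • (star a * a) := by rw [norm_sq_eq (A := A)]
    specialize h₁ (inner A x y)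
    simp only [star_inner, sub_self, zero_sub, le_neg_add_iff_add_le, add_zero] at h₁
    rwa [smul_le_smul_iff_of_pos_left (pow_pos hx _)] at h₁

variable (E) in
theorem norm_inner_le {x y : E} : ‖(inner A x y : A)‖ ≤ ‖x‖ * ‖y‖ := by
  have key : ‖(inner A x y : A)‖ ^ 2 ≤ (‖x‖ * ‖y‖) ^ 2 := by
    calc ‖(inner A x y : A)‖ ^ 2 = ‖(inner A y x : A) * inner A x y‖ := by
          rw [← star_inner x y, CStarRing.norm_star_mul_self, pow_two]
      _ ≤ ‖‖x‖ ^ 2 • (inner A y y : A)‖ := by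
          refine CStarAlgebra.norm_le_norm_of_nonneg_of_le ?_ inner_mul_inner_swap_le'
          rw [← star_inner x y]
          exact star_mul_self_nonneg _
      _ = ‖x‖ ^ 2 * ‖(inner A y y : A)‖ := by simp [norm_smul]
      _ = ‖x‖ ^ 2 * ‖y‖ ^ 2 := by rw [norm_sq_eq (A := A) (x := y)]
      _ = (‖x‖ * ‖y‖) ^ 2 := by rw [mul_pow]
  exact (pow_le_pow_iff_left₀ (norm_nonneg _) (by positivity) (by simp)).mp key

end CStarModuleOld

open CStarModuleOld in
/-- A "self-adjoint" (w.r.t. the `A`-valued inner product) continuous linear map on a Hilbert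
C*-module which is bounded below in norm is surjective. -/
theorem aux_selfadjoint_bounded_below_surj
    {A K : Type*} [NonUnitalCStarAlgebra A] [PartialOrder A] [StarOrderedRing A]
    [NormedAddCommGroup K] [NormedSpace ℂ K] [SMul Aᵐᵒᵖ K] [CStarModuleOld A K] [CompleteSpace K]
    (s : K →L[ℂ] K) (c : ℝ) (hc : 0 < c)
    (hsa : ∀ x y : K, (inner A (s x) y : A) = inner A x (s y))
    (hb : ∀ y : K, c * ‖y‖ ≤ ‖s y‖) : Function.Surjective s := by
  cases subsingleton_or_nontrivial K with
  | inl h => intro y; exact ⟨0, Subsingleton.elim _ _⟩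
  | inr hK =>
  -- uniform lower bound for `s - (I*t) • 1`, `t ≥ 0`
  have hbd : ∀ t : ℝ, 0 ≤ t → ∀ y : K, (c / 2) * ‖y‖ ≤ ‖s y - (Complex.I * t) • y‖ := by
    intro t ht y
    by_cases hty : t ≤ c / 2
    · have h1 : ‖(((Complex.I : ℂ) * t)) • y‖ = t * ‖y‖ := by
        rw [norm_smul]
        simp [abs_of_nonneg ht]
      have h2 := hb y
      have h3 := norm_sub_norm_le (s y) ((((Complex.I : ℂ) * t)) • y)
      have hy0 : (0:ℝ) ≤ ‖y‖ := norm_nonneg y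
      nlinarith
    · push_neg at hty
      rcases eq_or_ne y 0 with rfl | hy0
      · simp
      have hy : (0:ℝ) < ‖y‖ := norm_pos_iff.mpr hy0
      set a : A := inner A y (s y) with ha_def
      set h : A := inner A y y with hh_def
      have ha : star a = a := by
        rw [ha_def, star_inner]
        exact hsa y y
      have hh : star h = h := by rw [hh_def, star_inner]
      have key : (inner A y (s y - ((Complex.I : ℂ) * t) • y) : A)
          = a - ((Complex.I : ℂ) * t) • h := by
        simp [ha_def, hh_def]
      set z : A := a - ((Complex.I : ℂ) * t) • h with hz_def
      have hzstar : z - star z = -((2 * (Complex.I : ℂ) * t) • h) := by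
        rw [hz_def, star_sub, star_smul, ha, hh]
        rw [sub_sub_sub_cancel_left]
        rw [← sub_smul, ← neg_smul]
        congr 1
        simp [Complex.star_def, map_mul, Complex.conj_I, Complex.conj_ofReal]
        ring
      have hnorm1 : ‖z - star z‖ = 2 * t * ‖h‖ := by
        rw [hzstar, norm_neg, norm_smul]
        simp [abs_of_nonneg ht, Complex.normSq, mul_assoc]
      have h2z : ‖z - star z‖ ≤ 2 * ‖z‖ := by
        calc ‖z - star z‖ ≤ ‖z‖ + ‖star z‖ := norm_sub_le _ _
          _ = 2 * ‖z‖ := by rw [norm_star]; ring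
      have h3 : ‖z‖ ≤ ‖y‖ * ‖s y - ((Complex.I : ℂ) * t) • y‖ := by
        rw [← key]; exact norm_inner_le K
      have h4 : ‖h‖ = ‖y‖ ^ 2 := by rw [hh_def]; exact (norm_sq_eq (A := A)).symm
      nlinarith [norm_nonneg (s y - ((Complex.I : ℂ) * t) • y)]
  -- operator form of the bound
  have hbd' : ∀ t : ℝ, 0 ≤ t → ∀ y : K,
      (c / 2) * ‖y‖ ≤ ‖(s - ((Complex.I : ℂ) * t) • (1 : K →L[ℂ] K)) y‖ := by
    intro t ht y
    simpa using hbd t ht y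
  -- norm bound on inverses
  have hinv : ∀ (t : ℝ), 0 ≤ t → ∀ (u : (K →L[ℂ] K)ˣ),
      (u : K →L[ℂ] K) = s - ((Complex.I : ℂ) * t) • 1 →
      ‖((u⁻¹ : (K →L[ℂ] K)ˣ) : K →L[ℂ] K)‖ ≤ 2 / c := by
    intro t ht u hu
    refine ContinuousLinearMap.opNorm_le_bound _ (by positivity) fun z => ?_
    have h1 : (u : K →L[ℂ] K) (((u⁻¹ : (K →L[ℂ] K)ˣ) : K →L[ℂ] K) z) = z := by
      have h := congrArg (fun f : K →L[ℂ] K => f z) u.mul_inv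
      simpa only [ContinuousLinearMap.mul_apply, ContinuousLinearMap.one_apply] using h
    have h2 := hbd' t ht (((u⁻¹ : (K →L[ℂ] K)ˣ) : K →L[ℂ] K) z)
    rw [hu] at h1
    rw [h1] at h2
    have h3 := mul_le_mul_of_nonneg_left h2 (by positivity : (0:ℝ) ≤ 2 / c)
    calc ‖((u⁻¹ : (K →L[ℂ] K)ˣ) : K →L[ℂ] K) z‖
        = 2 / c * (c / 2 * ‖((u⁻¹ : (K →L[ℂ] K)ˣ) : K →L[ℂ] K) z‖) := by field_simp
      _ ≤ 2 / c * ‖z‖ := h3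
  set R : ℝ := ‖s‖ + 1 with hR
  have hstep : ∀ n : ℕ, ∀ t : ℝ, 0 ≤ t → R - n * (c / 4) ≤ t →
      IsUnit (s - ((Complex.I : ℂ) * t) • (1 : K →L[ℂ] K)) := by
    intro n
    induction n with
    | zero =>
      intro t ht hRt
      have hRt' : ‖s‖ + 1 ≤ t := by
        rw [hR] at hRt; push_cast at hRt; linarith
      have ht0 : (0:ℝ) < t := by nlinarith [norm_nonneg s]
      set μ : ℂ := (Complex.I : ℂ) * t with hμ
      have hμ0 : μ ≠ 0 := by
        rw [hμ]
        exact mul_ne_zero Complex.I_ne_zero (by exact_mod_cast ht0.ne')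
      have hnμ : ‖μ‖ = t := by
        rw [hμ]
        simp [norm_mul, abs_of_nonneg ht]
      have hlt : ‖μ⁻¹ • s‖ < 1 := by
        have hle : ‖μ⁻¹ • s‖ ≤ t⁻¹ * ‖s‖ := by
          refine ContinuousLinearMap.opNorm_le_bound _ (by positivity) fun y => ?_
          rw [ContinuousLinearMap.smul_apply, norm_smul, norm_inv, hnμ, mul_assoc]
          exact mul_le_mul_of_nonneg_left (s.le_opNorm y) (by positivity)
        have h2 : t⁻¹ * ‖s‖ < 1 := by
          rw [inv_mul_eq_div]; exact (div_lt_one ht0).mpr (by linarith)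
        linarith
      set w := Units.oneSub (μ⁻¹ • s) hlt with hw
      have hne : (-μ) ≠ 0 := neg_ne_zero.mpr hμ0
      have u1 : IsUnit ((-μ) • (1 : K →L[ℂ] K)) := by
        refine ⟨⟨(-μ) • 1, (-μ)⁻¹ • 1, ?_, ?_⟩, rfl⟩
        · rw [smul_mul_assoc, one_mul, smul_smul, mul_inv_cancel₀ hne, one_smul]
        · rw [smul_mul_assoc, one_mul, smul_smul, inv_mul_cancel₀ hne, one_smul]
      have hval : ((-μ) • (1 : K →L[ℂ] K)) * (w : K →L[ℂ] K) = s - μ • 1 := by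
        rw [hw, Units.val_oneSub, smul_mul_assoc, one_mul, smul_sub, smul_smul,
          neg_mul, mul_inv_cancel₀ hμ0]
        simp only [neg_smul, one_smul]
        abel
      have hu := u1.mul w.isUnit
      rw [hval] at hu
      exact hu
    | succ n ih =>
      intro t ht hRt
      obtain ⟨u, hu⟩ := ih (t + c / 4) (by linarith) (by push_cast at hRt ⊢; linarith)
      have hinvle := hinv (t + c / 4) (by linarith) u hu
      have hinvpos : 0 < ‖((u⁻¹ : (K →L[ℂ] K)ˣ) : K →L[ℂ] K)‖ := Units.norm_pos u⁻¹
      have hdiff : (s - ((Complex.I : ℂ) * t) • (1 : K →L[ℂ] K)) - (u : K →L[ℂ] K)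
          = (((Complex.I : ℂ) * (c / 4 : ℝ))) • (1 : K →L[ℂ] K) := by
        rw [hu, sub_sub_sub_cancel_left, ← sub_smul]
        congr 1
        push_cast
        ring
      have hdist : ‖(s - ((Complex.I : ℂ) * t) • (1 : K →L[ℂ] K)) - (u : K →L[ℂ] K)‖
          < ‖((u⁻¹ : (K →L[ℂ] K)ˣ) : K →L[ℂ] K)‖⁻¹ := by
        rw [hdiff]
        have habs : ‖(((Complex.I : ℂ) * (c / 4 : ℝ))) • (1 : K →L[ℂ] K)‖ ≤ c / 4 := by
          refine ContinuousLinearMap.opNorm_le_bound _ (by positivity) fun y => ?_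
          rw [ContinuousLinearMap.smul_apply, ContinuousLinearMap.one_apply, norm_smul]
          have h5 : ‖((Complex.I : ℂ) * (c / 4 : ℝ))‖ = c / 4 := by
            simp [abs_of_nonneg (by positivity : (0:ℝ) ≤ c / 4)]
            exact hc.le
          rw [h5]
        have hge : (2 / c)⁻¹ ≤ ‖((u⁻¹ : (K →L[ℂ] K)ˣ) : K →L[ℂ] K)‖⁻¹ :=
          inv_anti₀ hinvpos hinvle
        have h24 : (2 / c)⁻¹ = c / 2 := by rw [inv_div]
        have := h24 ▸ hge
        linarith
      exact (u.ofNearby _ hdist).isUnit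
  obtain ⟨n, hn⟩ := exists_nat_ge (R / (c / 4))
  have h0 : IsUnit s := by
    have h4 : (0:ℝ) < c / 4 := by positivity
    have := hstep n 0 le_rfl (by rw [div_le_iff₀ h4] at hn; linarith)
    simpa using this
  obtain ⟨u, hu⟩ := h0
  intro y
  refine ⟨((u⁻¹ : (K →L[ℂ] K)ˣ) : K →L[ℂ] K) y, ?_⟩
  have h := congrArg (fun f : K →L[ℂ] K => f y) u.mul_inv
  simp only [ContinuousLinearMap.mul_apply, ContinuousLinearMap.one_apply] at h
  rw [hu] at h
  exact h

/-- An adjointable map `T` between Hilbert C*-modules is surjective iff its adjoint `T*`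
is bounded below in norm. -/
theorem adjointable_surjective_iff_adjoint_bounded_below_norm
    {A H K : Type*} [NonUnitalCStarAlgebra A] [PartialOrder A] [StarOrderedRing A]
    [NormedAddCommGroup H] [NormedSpace ℂ H] [SMul Aᵐᵒᵖ H] [CStarModuleOld A H] [CompleteSpace H]
    [NormedAddCommGroup K] [NormedSpace ℂ K] [SMul Aᵐᵒᵖ K] [CStarModuleOld A K] [CompleteSpace K]
    (T : H →L[ℂ] K) (Tadj : K →L[ℂ] H)
    (hadj : ∀ (x : H) (y : K), (inner A (T x) y : A) = inner A x (Tadj y)) :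
    Function.Surjective T ↔ ∃ m : ℝ, 0 < m ∧ ∀ y : K, m * ‖y‖ ≤ ‖Tadj y‖ := by
  constructor
  · intro hsurj
    obtain ⟨C, hC, hpre⟩ := T.exists_preimage_norm_le hsurj
    refine ⟨C⁻¹, by positivity, fun y => ?_⟩
    rcases eq_or_ne y 0 with rfl | hy0
    · simp
    have hy : (0:ℝ) < ‖y‖ := norm_pos_iff.mpr hy0
    obtain ⟨x, hx, hxn⟩ := hpre y
    have h1 : ‖y‖ ^ 2 = ‖(inner A (T x) y : A)‖ := by
      rw [hx]; exact CStarModuleOld.norm_sq_eq (A := A)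
    rw [hadj x y] at h1
    have h2 : ‖(inner A x (Tadj y) : A)‖ ≤ ‖x‖ * ‖Tadj y‖ := CStarModuleOld.norm_inner_le H
    have h3 : ‖x‖ * ‖Tadj y‖ ≤ C * ‖y‖ * ‖Tadj y‖ :=
      mul_le_mul_of_nonneg_right hxn (norm_nonneg _)
    have h4 : ‖y‖ ≤ C * ‖Tadj y‖ := by nlinarith
    calc C⁻¹ * ‖y‖ ≤ C⁻¹ * (C * ‖Tadj y‖) := by
          exact mul_le_mul_of_nonneg_left h4 (by positivity)
      _ = ‖Tadj y‖ := by field_simp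
  · rintro ⟨m, hm, hbnd⟩
    set s : K →L[ℂ] K := T.comp Tadj with hs
    have hsy : ∀ y : K, s y = T (Tadj y) := fun _ => rfl
    have hsa : ∀ x y : K, (inner A (s x) y : A) = inner A x (s y) := by
      intro x y
      have e1 : (inner A (s x) y : A) = inner A (Tadj x) (Tadj y) := by
        rw [hsy]; exact hadj (Tadj x) y
      have e2 : (inner A x (s y) : A) = inner A (Tadj x) (Tadj y) := by
        calc (inner A x (s y) : A) = star (inner A (T (Tadj y)) x : A) := by
              rw [CStarModuleOld.star_inner, hsy]
          _ = star (inner A (Tadj y) (Tadj x) : A) := by rw [hadj]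
          _ = inner A (Tadj x) (Tadj y) := CStarModuleOld.star_inner _ _
      rw [e1, e2]
    have hb : ∀ y : K, m ^ 2 * ‖y‖ ≤ ‖s y‖ := by
      intro y
      rcases eq_or_ne y 0 with rfl | hy0
      · simp
      have hy : (0:ℝ) < ‖y‖ := norm_pos_iff.mpr hy0
      have h1 : ‖Tadj y‖ ^ 2 = ‖(inner A (s y) y : A)‖ := by
        rw [hsy, hadj (Tadj y) y]
        exact CStarModuleOld.norm_sq_eq (A := A)
      have h2 : ‖(inner A (s y) y : A)‖ ≤ ‖s y‖ * ‖y‖ := CStarModuleOld.norm_inner_le K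
      have h3 := hbnd y
      have h4 : (m * ‖y‖) * (m * ‖y‖) ≤ ‖Tadj y‖ * ‖Tadj y‖ :=
        mul_le_mul h3 h3 (by positivity) (norm_nonneg _)
      nlinarith
    have hsurj_s := aux_selfadjoint_bounded_below_surj s (m ^ 2) (by positivity) hsa hb
    intro y
    obtain ⟨x, hx⟩ := hsurj_s y
    exact ⟨Tadj x, hx⟩
end

section
/- Let H and K be Hilbert C*-modules over a C*-algebra A and let T : H → K be an adjointable map. Then T is surjective if and only if T* is bounded below with respect to the inner product, i.e., there exists m' > 0 such that ⟨T*y, T*y⟩ ≥ m'⟨y, y⟩ (as positive elements of A) for all y ∈ K. -/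
open scoped RightActions Unitization CStarAlgebra
open CStarModule Unitization

set_option linter.unusedSectionVars false
set_option maxHeartbeats 1000000
set_option synthInstance.maxHeartbeats 400000

/-- The Hilbert C⋆-module class as Mathlib defined it in December 2024 (right `A`-action
given by `SMul Aᵐᵒᵖ E`, `⟪x, y <• a⟫ = ⟪x, y⟫ * a`); Mathlib's `CStarModule` now uses a left
action, so the old notion is restated here. -/
class RightCStarModule (A E : Type*) [NonUnitalSemiring A] [StarRing A]
    [Module ℂ A] [AddCommGroup E] [Module ℂ E] [PartialOrder A] [SMul Aᵐᵒᵖ E] [Norm A] [Norm E]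
    extends Inner A E where
  inner_add_right {x} {y} {z} : inner x (y + z) = inner x y + inner x z
  inner_self_nonneg {x} : 0 ≤ inner x x
  inner_self {x} : inner x x = 0 ↔ x = 0
  inner_op_smul_right {a : A} {x y : E} : inner x (MulOpposite.op a • y) = inner x y * a
  inner_smul_right_complex {z : ℂ} {x} {y} : inner x (z • y) = z • inner x y
  star_inner x y : star (inner x y) = inner y x
  norm_eq_sqrt_norm_inner_self x : ‖x‖ = √‖inner x x‖


namespace RightCStarModule

variable {A E : Type*} [NonUnitalCStarAlgebra A] [PartialOrder A]
  [NormedAddCommGroup E] [NormedSpace ℂ E] [SMul Aᵐᵒᵖ E] [RightCStarModule A E]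

lemma inner_add_left {x y z : E} : inner A (x + y) z = inner A x z + inner A y z := by
  rw [← star_star (r := inner A (x + y) z)]
  simp only [RightCStarModule.inner_add_right, star_add, RightCStarModule.star_inner]

lemma inner_op_smul_left {a : A} {x y : E} : inner A (x <• a) y = star a * inner A x y := by
  rw [← RightCStarModule.star_inner, RightCStarModule.inner_op_smul_right, star_mul,
    RightCStarModule.star_inner]

lemma inner_smul_left_complex {z : ℂ} {x y : E} : inner A (z • x) y = star z • inner A x y := by
  rw [← RightCStarModule.star_inner, RightCStarModule.inner_smul_right_complex, star_smul,
    RightCStarModule.star_inner]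

lemma inner_smul_left_real {z : ℝ} {x y : E} : inner A (z • x) y = z • inner A x y := by
  have h₁ : z • x = (z : ℂ) • x := by simp
  rw [h₁, inner_smul_left_complex]
  simp

lemma inner_smul_right_real {z : ℝ} {x y : E} : inner A x (z • y) = z • inner A x y := by
  have h₁ : z • y = (z : ℂ) • y := by simp
  rw [h₁, RightCStarModule.inner_smul_right_complex]
  simp

lemma inner_sub_right {x y z : E} : inner A x (y - z) = inner A x y - inner A x z := by
  have h : inner A x (y - z) + inner A x z = inner A x y := by
    rw [← RightCStarModule.inner_add_right, sub_add_cancel]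
  exact eq_sub_of_add_eq h

lemma inner_sub_left {x y z : E} : inner A (x - y) z = inner A x z - inner A y z := by
  have h : inner A (x - y) z + inner A y z = inner A x z := by
    rw [← inner_add_left, sub_add_cancel]
  exact eq_sub_of_add_eq h

lemma inner_zero_left {y : E} : inner A (0 : E) y = 0 := by
  have h := inner_add_left (A := A) (x := (0 : E)) (y := 0) (z := y)
  rw [add_zero] at h
  simpa using h

lemma norm_sq_eq {x : E} : ‖x‖ ^ 2 = ‖inner A x x‖ := by
  rw [RightCStarModule.norm_eq_sqrt_norm_inner_self (A := A) x, Real.sq_sqrt (norm_nonneg _)]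

variable [StarOrderedRing A]

lemma inner_mul_inner_swap_le {x y : E} : inner A y x * inner A x y ≤ ‖x‖ ^ 2 • inner A y y := by
  rcases eq_or_ne x 0 with h | h
  · rw [h, inner_zero_left, mul_zero, norm_zero]
    simp
  · have h₁ : ∀ (a : A),
        (0 : A) ≤ ‖x‖ ^ 2 • (star a * a) - ‖x‖ ^ 2 • (inner A y x * a)
                  - ‖x‖ ^ 2 • (star a * inner A x y) + ‖x‖ ^ 2 • (‖x‖ ^ 2 • inner A y y) := fun a => by
      calc (0 : A) ≤ inner A (x <• a - ‖x‖ ^ 2 • y) (x <• a - ‖x‖ ^ 2 • y) := by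
                      exact RightCStarModule.inner_self_nonneg
            _ = star a * inner A x x * a - ‖x‖ ^ 2 • (inner A y x * a)
                  - ‖x‖ ^ 2 • (star a * inner A x y) + ‖x‖ ^ 2 • (‖x‖ ^ 2 • inner A y y) := by
                      simp only [inner_sub_right, RightCStarModule.inner_op_smul_right,
                        inner_sub_left, inner_op_smul_left, inner_smul_left_real, mul_sub, sub_mul,
                        mul_smul_comm, smul_mul_assoc, inner_smul_right_real, smul_sub, mul_assoc]
                      abel
            _ ≤ ‖x‖ ^ 2 • (star a * a) - ‖x‖ ^ 2 • (inner A y x * a)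
                  - ‖x‖ ^ 2 • (star a * inner A x y) + ‖x‖ ^ 2 • (‖x‖ ^ 2 • inner A y y) := by
                      gcongr
                      calc _ ≤ ‖inner A x x‖ • (star a * a) :=
                          CStarAlgebra.star_left_conjugate_le_norm_smul (hb := RightCStarModule.star_inner x x)
                        _ = ‖x‖ ^ 2 • (star a * a) := by rw [norm_sq_eq (A := A)]
    specialize h₁ (inner A x y)
    simp only [RightCStarModule.star_inner, sub_self, zero_sub, le_neg_add_iff_add_le,
      add_zero] at h₁
    rwa [smul_le_smul_iff_of_pos_left (pow_pos (norm_pos_iff.mpr h) _)] at h₁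

variable (E) in
lemma norm_inner_le {x y : E} : ‖inner A x y‖ ≤ ‖x‖ * ‖y‖ := by
  have := calc ‖inner A x y‖ ^ 2 = ‖inner A y x * inner A x y‖ := by
                rw [← RightCStarModule.star_inner x y, CStarRing.norm_star_mul_self, pow_two]
    _ ≤ ‖‖x‖ ^ 2 • inner A y y‖ := by
                refine CStarAlgebra.norm_le_norm_of_nonneg_of_le ?_ inner_mul_inner_swap_le
                rw [← RightCStarModule.star_inner x y]
                exact star_mul_self_nonneg _
    _ = ‖x‖ ^ 2 * ‖inner A y y‖ := by simp [norm_smul]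
    _ = ‖x‖ ^ 2 * ‖y‖ ^ 2 := by rw [norm_sq_eq (A := A) (x := y)]
    _ = (‖x‖ * ‖y‖) ^ 2 := by ring
  exact (pow_le_pow_iff_left₀ (norm_nonneg _) (by positivity) two_ne_zero).mp this

end RightCStarModule


section aux
variable {A : Type*} [NonUnitalCStarAlgebra A] [PartialOrder A] [StarOrderedRing A]
  {H K : Type*}
  [NormedAddCommGroup H] [NormedSpace ℂ H] [SMul Aᵐᵒᵖ H] [RightCStarModule A H]
  [NormedAddCommGroup K] [NormedSpace ℂ K] [SMul Aᵐᵒᵖ K] [RightCStarModule A K]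

private lemma my_sep {z : H} (h : ∀ w : H, (inner A z w : A) = 0) : z = 0 := by
  have := h z
  rwa [RightCStarModule.inner_self] at this

private lemma my_opSmul_comm (T : H →L[ℂ] K) (Tadj : K →L[ℂ] H)
    (hadj : ∀ x y, (inner A (T x) y : A) = inner A x (Tadj y)) (x : H) (a : A) :
    T (x <• a) = (T x) <• a := by
  have key : ∀ w : K, (inner A (T (x <• a) - (T x) <• a) w : A) = 0 := by
    intro w
    rw [RightCStarModule.inner_sub_left, hadj, RightCStarModule.inner_op_smul_left,
      RightCStarModule.inner_op_smul_left, hadj, sub_self]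
  have := my_sep key
  rwa [sub_eq_zero] at this

private lemma my_base (R : H →L[ℂ] K) (Radj : K →L[ℂ] H)
    (h : ∀ x y, (inner A (R x) y : A) = inner A x (Radj y)) (z : H) :
    (inner A (R z) (R z) : A) * (inner A (R z) (R z) : A)
      ≤ ((‖Radj‖ * ‖R‖)^2 * ‖z‖^2) • (inner A z z : A) := by
  set w := Radj (R z) with hw
  have hd : (inner A (R z) (R z) : A) = inner A z w := h z (R z)
  have hsa : (inner A w z : A) = inner A z w := by
    rw [← RightCStarModule.star_inner, ← hd, RightCStarModule.star_inner, hd]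
  have step1 : (inner A (R z) (R z) : A) * (inner A (R z) (R z) : A)
      = (inner A z w : A) * (inner A w z : A) := by rw [hd, hsa]
  rw [step1]
  refine le_trans (RightCStarModule.inner_mul_inner_swap_le) ?_
  have hwn : ‖w‖ ≤ (‖Radj‖ * ‖R‖) * ‖z‖ := by
    calc ‖w‖ ≤ ‖Radj‖ * ‖R z‖ := Radj.le_opNorm _
    _ ≤ ‖Radj‖ * (‖R‖ * ‖z‖) := by
        have := R.le_opNorm z
        exact mul_le_mul_of_nonneg_left this (norm_nonneg _)
    _ = (‖Radj‖ * ‖R‖) * ‖z‖ := by ring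
  have h2 : ‖w‖^2 ≤ (‖Radj‖ * ‖R‖)^2 * ‖z‖^2 := by
    rw [← mul_pow]
    exact pow_le_pow_left₀ (norm_nonneg _) hwn 2
  exact smul_le_smul_of_nonneg_right h2 RightCStarModule.inner_self_nonneg


private lemma my_eps (p d : A) (hp : 0 ≤ p) (hd : 0 ≤ d) (c : ℝ) (hc : 0 ≤ c)
    (ε : ℝ) (hε : 0 < ε)
    (base : ∀ b : A, IsSelfAdjoint b →
      let s := (Real.sqrt ε)⁻¹
      (s•(s•d) + s•(d*b) + s•(b*d) + b*(d*b))*(s•(s•d) + s•(d*b) + s•(b*d) + b*(d*b))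
        ≤ (c^2 * ‖s•(s•p) + s•(p*b) + s•(b*p) + b*(p*b)‖) • (s•(s•p) + s•(p*b) + s•(b*p) + b*(p*b))) :
    (d : A⁺¹) ≤ c • (p : A⁺¹) + (c*ε) • 1 := by
  set s : ℝ := (Real.sqrt ε)⁻¹ with hs_def
  have hsqrt : 0 < Real.sqrt ε := Real.sqrt_pos.mpr hε
  set P : A⁺¹ := (p : A⁺¹) with hP_def
  set D : A⁺¹ := (d : A⁺¹) with hD_def
  have hP : 0 ≤ P := inr_nonneg_iff.mpr hp
  have hD : 0 ≤ D := inr_nonneg_iff.mpr hd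
  have hPsa : IsSelfAdjoint P := .of_nonneg hP
  have hDsa : IsSelfAdjoint D := .of_nonneg hD
  have hspec : ∀ t ∈ spectrum ℝ P, 0 ≤ t := spectrum_nonneg_of_nonneg hP
  set f : ℝ → ℝ := fun t => (Real.sqrt (t+ε))⁻¹ with hf_def
  set g : ℝ → ℝ := fun t => Real.sqrt (t+ε) with hg_def
  have hgc : Continuous g := Real.continuous_sqrt.comp (continuous_id.add continuous_const)
  have hg : ContinuousOn g (spectrum ℝ P) := hgc.continuousOn
  have hgpos : ∀ t ∈ spectrum ℝ P, 0 < g t := fun t ht =>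
    Real.sqrt_pos.mpr (by have := hspec t ht; linarith)
  have hf : ContinuousOn f (spectrum ℝ P) :=
    ContinuousOn.inv₀ hg (fun t ht => (hgpos t ht).ne')
  set b : A := cfcₙ (fun t => f t - s) p with hb_def
  have hb_inr : (b : A⁺¹) = cfc (fun t => f t - s) P := by
    rw [hb_def, hP_def]
    exact Unitization.real_cfcₙ_eq_cfc_inr p _ (by simp [hf_def, hs_def, zero_add])
  have hb_sa : IsSelfAdjoint b := by rw [hb_def]; exact IsSelfAdjoint.cfcₙ
  set a : A⁺¹ := cfc f P with ha_def
  have ha_sa : IsSelfAdjoint a := by rw [ha_def]; exact IsSelfAdjoint.cfc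
  have ha_eq : a = s • 1 + (b : A⁺¹) := by
    rw [hb_inr, ha_def]
    rw [← Algebra.algebraMap_eq_smul_one, ← cfc_const s P hPsa,
      ← cfc_add P (fun _ => s) (fun t => f t - s) (by fun_prop) (by exact hf.sub continuousOn_const)]
    exact cfc_congr fun t _ => by ring
  have hshell : ∀ X : A, ((s•(s•X) + s•(X*b) + s•(b*X) + b*(X*b) : A) : A⁺¹)
      = a * (X : A⁺¹) * a := by
    intro X
    rw [ha_eq]
    push_cast
    simp only [add_mul, mul_add, smul_mul_assoc, mul_smul_comm, one_mul, mul_one, mul_assoc]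
    simp only [Unitization.inr_add, Unitization.inr_mul, Unitization.inr_smul, smul_add]
    abel
  have hbase := base b hb_sa
  set p' : A := s•(s•p) + s•(p*b) + s•(b*p) + b*(p*b) with hp'_def
  set d' : A := s•(s•d) + s•(d*b) + s•(b*d) + b*(d*b) with hd'_def
  have hp'_inr : ((p' : A) : A⁺¹) = a * P * a := hshell p
  have hd'_inr : ((d' : A) : A⁺¹) = a * D * a := hshell d
  have hdsa' : IsSelfAdjoint d := .of_nonneg hd
  have hpsa' : IsSelfAdjoint p := .of_nonneg hp
  have hd'_sa : IsSelfAdjoint d' := by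
    rw [hd'_def]
    simp only [IsSelfAdjoint, star_add, star_smul, star_mul, star_trivial, hb_sa.star_eq,
      hdsa'.star_eq, mul_assoc]
    abel
  have hp'_sa : IsSelfAdjoint p' := by
    rw [hp'_def]
    simp only [IsSelfAdjoint, star_add, star_smul, star_mul, star_trivial, hb_sa.star_eq,
      hpsa'.star_eq, mul_assoc]
    abel
  -- push base inequality to the unitization
  have h1 : (a*D*a) * (a*D*a) ≤ (c^2 * ‖a*P*a‖) • (a*P*a) := by
    have h2 : ((d' * d' : A) : A⁺¹) ≤ (((c^2 * ‖p'‖) • p' : A) : A⁺¹) :=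
      (Unitization.inr_le_iff _ _ (by simp [IsSelfAdjoint, star_mul, hd'_sa.star_eq])
        (IsSelfAdjoint.smul (star_trivial _) hp'_sa)).mpr hbase
    have hnn : ‖p'‖ = ‖a*P*a‖ := by rw [← hp'_inr, Unitization.norm_inr]
    rw [Unitization.inr_mul, Unitization.inr_smul, hd'_inr, hp'_inr, hnn] at h2
    exact h2
  -- the function shape of a*P*a and its norm bound
  have he_eq : a * P * a = cfc (fun t => f t * (t * f t)) P := by
    have h1' : cfc (fun t => f t * (t * f t)) P = a * (P * a) := by
      rw [cfc_mul f (fun t => t * f t) P hf (continuousOn_id.mul hf),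
        cfc_mul (fun t => t) f P continuousOn_id hf, cfc_id' ℝ P hPsa, ha_def]
    rw [h1', mul_assoc]
  have he_norm : ‖a * P * a‖ ≤ 1 := by
    rw [he_eq]
    refine norm_cfc_le zero_le_one (fun t ht => ?_)
    have ht0 : 0 ≤ t := hspec t ht
    have htε : 0 < t + ε := by linarith
    have : f t * (t * f t) = t / (t+ε) := by
      rw [hf_def]
      rw [show ((Real.sqrt (t+ε))⁻¹ * (t * (Real.sqrt (t+ε))⁻¹))
          = t * (Real.sqrt (t+ε) * Real.sqrt (t+ε))⁻¹ by rw [mul_inv]; ring]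
      rw [Real.mul_self_sqrt htε.le, div_eq_mul_inv]
    rw [this, Real.norm_eq_abs, abs_of_nonneg (by positivity)]
    exact div_le_one_of_le₀ (by linarith) htε.le
  have hDa_sa : IsSelfAdjoint (a*D*a) := by
    simp [IsSelfAdjoint, star_mul, ha_sa.star_eq, hDsa.star_eq, mul_assoc]
  have hDa_nonneg : 0 ≤ a*D*a := by
    have := star_left_conjugate_nonneg hD a
    rwa [ha_sa.star_eq] at this
  have hnorm2 : ‖a*D*a‖^2 ≤ c^2 := by
    have e1 : ‖a*D*a‖^2 = ‖(a*D*a)*(a*D*a)‖ := by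
      calc ‖a*D*a‖^2 = ‖a*D*a‖*‖a*D*a‖ := by ring
      _ = ‖star (a*D*a) * (a*D*a)‖ := (CStarRing.norm_star_mul_self).symm
      _ = ‖(a*D*a)*(a*D*a)‖ := by rw [hDa_sa.star_eq]
    have e2 : ‖(a*D*a)*(a*D*a)‖ ≤ ‖(c^2 * ‖a*P*a‖) • (a*P*a)‖ := by
      refine CStarAlgebra.norm_le_norm_of_nonneg_of_le ?_ h1
      have := star_mul_self_nonneg (a*D*a)
      rwa [hDa_sa.star_eq] at this
    have e3 : ‖(c^2 * ‖a*P*a‖) • (a*P*a)‖ ≤ c^2 := by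
      rw [norm_smul, Real.norm_eq_abs, abs_of_nonneg (by positivity)]
      calc c^2 * ‖a*P*a‖ * ‖a*P*a‖ ≤ c^2 * 1 * 1 := by
            apply mul_le_mul (mul_le_mul le_rfl he_norm (norm_nonneg _) (sq_nonneg c)) he_norm
              (norm_nonneg _) (by positivity)
      _ = c^2 := by ring
    linarith
  have hn : ‖a*D*a‖ ≤ c := by nlinarith [norm_nonneg (a*D*a)]
  have hle : a*D*a ≤ algebraMap ℝ (A⁺¹) c :=
    (CStarAlgebra.norm_le_iff_le_algebraMap _ hc hDa_nonneg).mp hn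
  set G : A⁺¹ := cfc g P with hG_def
  have hG_sa : IsSelfAdjoint G := IsSelfAdjoint.cfc
  have hGa : G * a = 1 := by
    rw [hG_def, ha_def, ← cfc_mul g f P hg hf]
    rw [cfc_congr (g := fun _ => (1:ℝ)) (fun t ht => mul_inv_cancel₀ (hgpos t ht).ne'),
      cfc_const _ _ hPsa, map_one]
  have haG : a * G = 1 := by
    rw [hG_def, ha_def, ← cfc_mul f g P hf hg]
    rw [cfc_congr (g := fun _ => (1:ℝ)) (fun t ht => inv_mul_cancel₀ (hgpos t ht).ne'),
      cfc_const _ _ hPsa, map_one]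
  have hGG : G * G = P + algebraMap ℝ (A⁺¹) ε := by
    rw [hG_def, ← cfc_mul g g P hg hg]
    rw [cfc_congr (g := fun t => t + ε)
      (fun t ht => Real.mul_self_sqrt (by have := hspec t ht; linarith))]
    rw [cfc_add P _ _ (by fun_prop) (by fun_prop), cfc_id' ℝ P hPsa, cfc_const _ _ hPsa]
  have conj := star_left_conjugate_le_conjugate hle G
  rw [hG_sa.star_eq] at conj
  have hL : G * (a*D*a) * G = D := by
    have h' : G * (a*D*a) * G = (G*a) * D * (a*G) := by noncomm_ring
    rw [h', hGa, haG, one_mul, mul_one]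
  have hR : G * algebraMap ℝ (A⁺¹) c * G = c • P + (c*ε) • 1 := by
    rw [Algebra.algebraMap_eq_smul_one]
    have h'' : G * (c • (1:A⁺¹)) * G = c • (G*G) := by
      simp [mul_smul_comm, smul_mul_assoc]
    rw [h'', hGG, smul_add, Algebra.algebraMap_eq_smul_one, smul_smul]
  rw [hL, hR] at conj
  exact conj

private lemma my_lemP (R : H →L[ℂ] K) (Radj : K →L[ℂ] H)
    (h : ∀ x y, (inner A (R x) y : A) = inner A x (Radj y)) (x : H) :
    (inner A (R x) (R x) : A) ≤ (‖Radj‖ * ‖R‖) • (inner A x x : A) := by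
  set c : ℝ := ‖Radj‖ * ‖R‖ with hc_def
  have hc : 0 ≤ c := mul_nonneg (norm_nonneg _) (norm_nonneg _)
  set p : A := (inner A x x : A) with hp_def
  set d : A := (inner A (R x) (R x) : A) with hd_def
  have hp : 0 ≤ p := RightCStarModule.inner_self_nonneg
  have hd : 0 ≤ d := RightCStarModule.inner_self_nonneg
  have hbase : ∀ (s : ℝ) (b : A), IsSelfAdjoint b →
      (s•(s•d) + s•(d*b) + s•(b*d) + b*(d*b))*(s•(s•d) + s•(d*b) + s•(b*d) + b*(d*b))
        ≤ (c^2 * ‖s•(s•p) + s•(p*b) + s•(b*p) + b*(p*b)‖)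
            • (s•(s•p) + s•(p*b) + s•(b*p) + b*(p*b)) := by
    intro s b hb
    set x' : H := s • x + x <• b with hx'_def
    have hRx' : R x' = s • (R x) + (R x) <• b := by
      rw [hx'_def, map_add, ContinuousLinearMap.map_smul_of_tower, my_opSmul_comm R Radj h]
    have hp' : (inner A x' x' : A) = s•(s•p) + s•(p*b) + s•(b*p) + b*(p*b) := by
      rw [hx'_def]
      simp only [RightCStarModule.inner_add_right, RightCStarModule.inner_add_left,
        RightCStarModule.inner_smul_right_real, RightCStarModule.inner_smul_left_real,
        RightCStarModule.inner_op_smul_right, RightCStarModule.inner_op_smul_left,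
        hb.star_eq, smul_add, add_mul, smul_mul_assoc, mul_assoc, ← hp_def]
      abel
    have hd' : (inner A (R x') (R x') : A) = s•(s•d) + s•(d*b) + s•(b*d) + b*(d*b) := by
      rw [hRx']
      simp only [RightCStarModule.inner_add_right, RightCStarModule.inner_add_left,
        RightCStarModule.inner_smul_right_real, RightCStarModule.inner_smul_left_real,
        RightCStarModule.inner_op_smul_right, RightCStarModule.inner_op_smul_left,
        hb.star_eq, smul_add, add_mul, smul_mul_assoc, mul_assoc, ← hd_def]
      abel
    have hb2 := my_base R Radj h x'
    rw [RightCStarModule.norm_sq_eq (A := A), hp', hd'] at hb2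
    exact hb2
  rw [← Unitization.inr_le_iff d (c • p) (IsSelfAdjoint.of_nonneg hd)
    (IsSelfAdjoint.smul (star_trivial c) (IsSelfAdjoint.of_nonneg hp)), Unitization.inr_smul]
  have key : ∀ ε : ℝ, 0 < ε → (d : A⁺¹) ≤ c • (p : A⁺¹) + (c*ε) • 1 := fun ε hε =>
    my_eps p d hp hd c hc ε hε (fun b hb => hbase _ b hb)
  have tend : Filter.Tendsto (fun ε : ℝ => c • (p : A⁺¹) + (c*ε) • (1:A⁺¹))
      (nhdsWithin 0 (Set.Ioi 0)) (nhds (c • (p : A⁺¹))) := by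
    have h1 : Filter.Tendsto (fun ε : ℝ => c • (p : A⁺¹) + (c*ε) • (1:A⁺¹)) (nhds 0)
        (nhds (c • (p : A⁺¹) + (c*0) • (1:A⁺¹))) := by
      apply Filter.Tendsto.add tendsto_const_nhds
      exact (((continuous_const.mul continuous_id).tendsto 0).smul_const (1:A⁺¹))
    simpa using h1.mono_left nhdsWithin_le_nhds
  refine ge_of_tendsto tend ?_
  filter_upwards [self_mem_nhdsWithin] with ε hε
  exact key ε hε

end aux

section main
variable {A H K : Type*} [NonUnitalCStarAlgebra A] [PartialOrder A] [StarOrderedRing A]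
    [NormedAddCommGroup H] [NormedSpace ℂ H] [SMul Aᵐᵒᵖ H] [RightCStarModule A H] [CompleteSpace H]
    [NormedAddCommGroup K] [NormedSpace ℂ K] [SMul Aᵐᵒᵖ K] [RightCStarModule A K] [CompleteSpace K]

private lemma my_mpr (T : H →L[ℂ] K) (Tadj : K →L[ℂ] H)
    (hadj : ∀ (x : H) (y : K), (inner A (T x) y : A) = inner A x (Tadj y))
    (m : ℝ) (hm : 0 < m)
    (hbound : ∀ y : K, m • (inner A y y : A) ≤ (inner A (Tadj y) (Tadj y) : A)) :
    Function.Surjective T := by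
  classical
  set S : K →L[ℂ] K := T.comp Tadj with hS_def
  have hq : ∀ y : K, (inner A (S y) y : A) = inner A (Tadj y) (Tadj y) := fun y => hadj (Tadj y) y
  intro y
  by_cases hK : ∀ z : K, z = 0
  · exact ⟨0, by rw [map_zero]; exact (hK y).symm⟩
  push_neg at hK
  obtain ⟨z0, hz0⟩ := hK
  have hz0' : 0 < ‖z0‖ := norm_pos_iff.mpr hz0
  have hmS : m ≤ ‖S‖ := by
    have h1 : (0:A) ≤ m • (inner A z0 z0 : A) :=
      smul_nonneg hm.le RightCStarModule.inner_self_nonneg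
    have h3 : ‖m • (inner A z0 z0 : A)‖ ≤ ‖(inner A (Tadj z0) (Tadj z0) : A)‖ :=
      CStarAlgebra.norm_le_norm_of_nonneg_of_le h1 (hbound z0)
    rw [norm_smul, Real.norm_eq_abs, abs_of_pos hm] at h3
    have h4 : ‖(inner A (Tadj z0) (Tadj z0) : A)‖ ≤ ‖S‖ * (‖z0‖*‖z0‖) := by
      rw [← hq z0]
      calc ‖(inner A (S z0) z0 : A)‖ ≤ ‖S z0‖ * ‖z0‖ := RightCStarModule.norm_inner_le K
        _ ≤ (‖S‖*‖z0‖)*‖z0‖ :=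
            mul_le_mul_of_nonneg_right (S.le_opNorm z0) (norm_nonneg _)
        _ = ‖S‖*(‖z0‖*‖z0‖) := by ring
    have h5 : ‖(inner A z0 z0 : A)‖ = ‖z0‖*‖z0‖ := by
      rw [← RightCStarModule.norm_sq_eq (A := A) (x := z0)]; ring
    rw [h5] at h3
    have h20 := le_trans h3 h4
    nlinarith [h20, hz0', mul_pos hz0' hz0']
  set N : ℝ := ‖S‖ with hN_def
  have hN : 0 < N := lt_of_lt_of_le hm hmS
  set t : ℝ := m / (N^2 + m^2) with ht_def
  have htpos : 0 < t := div_pos hm (by positivity)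
  have htNm : t * (N^2 + m^2) = m := by
    rw [ht_def]; field_simp
  have h2tm : 2*t*m ≤ 1 := by
    nlinarith [htNm, sq_nonneg (N - m), sq_nonneg (N + m), mul_pos htpos hm]
  have htN : t * N^2 ≤ m := by
    nlinarith [htNm, mul_nonneg htpos.le (sq_nonneg m)]
  set q : ℝ := 1 - 2*t*m + t^2*N^2 with hq_def
  have hq0 : 0 ≤ q := by rw [hq_def]; nlinarith
  have hq1 : q < 1 := by rw [hq_def]; nlinarith
  have key : ∀ z : K, ‖z - t • S z‖^2 ≤ q * ‖z‖^2 := by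
    intro z
    set P : A := (inner A z z : A) with hP_def
    set Q : A := (inner A (S z) z : A) with hQ_def
    have hQeq : Q = (inner A (Tadj z) (Tadj z) : A) := hq z
    have hQsa : star Q = Q := by rw [hQeq]; exact RightCStarModule.star_inner _ _
    have hQpos : (0:A) ≤ Q := by rw [hQeq]; exact RightCStarModule.inner_self_nonneg
    have hQlow : m • P ≤ Q := by rw [hQeq, hP_def]; exact hbound z
    have hE : (inner A (z - t • S z) (z - t • S z) : A)
        = P - (2*t) • Q + (t^2) • (inner A (S z) (S z) : A) := by
      simp only [RightCStarModule.inner_sub_right, RightCStarModule.inner_sub_left,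
        RightCStarModule.inner_smul_right_real, RightCStarModule.inner_smul_left_real, ← hP_def, ← hQ_def]
      have hzy : (inner A z (S z) : A) = Q := by
        rw [hQ_def, ← RightCStarModule.star_inner (S z) z, hQsa]
      rw [hzy]
      rw [show (2*t) • Q = t • Q + t • Q by rw [two_mul, add_smul]]
      rw [show (t^2) • (inner A (S z) (S z) : A) = t • (t • (inner A (S z) (S z) : A)) by
        rw [smul_smul, sq]]
      rw [smul_sub]
      abel
    have hEle : (inner A (z - t • S z) (z - t • S z) : A)
        ≤ (1 - 2*t*m) • P + (t^2) • (inner A (S z) (S z) : A) := by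
      rw [hE]
      have h6 : (2*t) • (m • P) ≤ (2*t) • Q :=
        smul_le_smul_of_nonneg_left hQlow (by positivity)
      have h7 : P - (2*t) • Q ≤ P - (2*t*m) • P := by
        rw [show (2*t*m) • P = (2*t) • (m • P) by rw [smul_smul]]
        exact sub_le_sub_left h6 P
      calc P - (2*t) • Q + (t^2) • (inner A (S z) (S z) : A)
          ≤ P - (2*t*m) • P + (t^2) • (inner A (S z) (S z) : A) := by
            exact add_le_add_left h7 _
        _ = (1 - 2*t*m) • P + (t^2) • (inner A (S z) (S z) : A) := by
            rw [sub_smul, one_smul]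
    have hnorm : ‖(inner A (z - t • S z) (z - t • S z) : A)‖ ≤ q * ‖z‖^2 := by
      have h8 : ‖(inner A (z - t • S z) (z - t • S z) : A)‖
          ≤ ‖(1 - 2*t*m) • P + (t^2) • (inner A (S z) (S z) : A)‖ :=
        CStarAlgebra.norm_le_norm_of_nonneg_of_le RightCStarModule.inner_self_nonneg hEle
      have h9 : ‖(1 - 2*t*m) • P + (t^2) • (inner A (S z) (S z) : A)‖
          ≤ (1 - 2*t*m) * ‖P‖ + t^2 * ‖(inner A (S z) (S z) : A)‖ := by
        refine le_trans (norm_add_le _ _) ?_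
        rw [norm_smul, norm_smul, Real.norm_eq_abs, Real.norm_eq_abs,
          abs_of_nonneg (by linarith), abs_of_nonneg (sq_nonneg t)]
      have h10 : ‖P‖ = ‖z‖^2 := (RightCStarModule.norm_sq_eq (A := A)).symm
      have h11 : ‖(inner A (S z) (S z) : A)‖ = ‖S z‖^2 :=
        (RightCStarModule.norm_sq_eq (A := A)).symm
      have h12 : ‖S z‖^2 ≤ (N*‖z‖)^2 := by
        have := S.le_opNorm z
        have h13 : 0 ≤ ‖S z‖ := norm_nonneg _
        nlinarith
      rw [h10, h11] at h9
      refine le_trans h8 (le_trans h9 ?_)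
      rw [hq_def]
      nlinarith [norm_nonneg z]
    rw [RightCStarModule.norm_sq_eq (A := A)]
    exact hnorm
  have hop : ‖(1 : K →L[ℂ] K) - t • S‖ ≤ Real.sqrt q := by
    refine ContinuousLinearMap.opNorm_le_bound _ (Real.sqrt_nonneg q) (fun z => ?_)
    have h14 : ((1 : K →L[ℂ] K) - t • S) z = z - t • S z := by
      simp [ContinuousLinearMap.sub_apply, ContinuousLinearMap.smul_apply]
    rw [h14]
    have h15 := key z
    have h16 : ‖z - t • S z‖ = Real.sqrt (‖z - t • S z‖^2) :=
      (Real.sqrt_sq (norm_nonneg _)).symm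
    rw [h16]
    refine le_trans (Real.sqrt_le_sqrt h15) ?_
    rw [Real.sqrt_mul hq0, Real.sqrt_sq (norm_nonneg _)]
  have hlt : ‖(1 : K →L[ℂ] K) - t • S‖ < 1 := by
    refine lt_of_le_of_lt hop ?_
    calc Real.sqrt q < Real.sqrt 1 := Real.sqrt_lt_sqrt hq0 hq1
      _ = 1 := Real.sqrt_one
  set u : (K →L[ℂ] K)ˣ := Units.oneSub ((1 : K →L[ℂ] K) - t • S) hlt with hu_def
  have huval : (u : K →L[ℂ] K) = t • S := by
    rw [hu_def]
    show (1 : K →L[ℂ] K) - ((1 : K →L[ℂ] K) - t • S) = t • S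
    rw [sub_sub_cancel]
  refine ⟨t • Tadj ((↑u⁻¹ : K →L[ℂ] K) y), ?_⟩
  have h17 : T (t • Tadj ((↑u⁻¹ : K →L[ℂ] K) y)) = (t • S) ((↑u⁻¹ : K →L[ℂ] K) y) := by
    rw [T.map_smul_of_tower]
    rfl
  rw [h17, ← huval]
  calc (u : K →L[ℂ] K) ((↑u⁻¹ : K →L[ℂ] K) y)
      = ((u : K →L[ℂ] K) * (↑u⁻¹ : K →L[ℂ] K)) y := rfl
    _ = y := by rw [u.mul_inv]; rfl

private lemma my_mp (T : H →L[ℂ] K) (Tadj : K →L[ℂ] H)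
    (hadj : ∀ (x : H) (y : K), (inner A (T x) y : A) = inner A x (Tadj y))
    (hsurj : Function.Surjective T) :
    ∃ m' : ℝ, 0 < m' ∧ ∀ y : K, m' • (inner A y y : A) ≤ (inner A (Tadj y) (Tadj y) : A) := by
  classical
  set S : K →L[ℂ] K := T.comp Tadj with hS_def
  have hq : ∀ y : K, (inner A (S y) y : A) = inner A (Tadj y) (Tadj y) := fun y => hadj (Tadj y) y
  obtain ⟨C, hC, hCy⟩ := T.exists_preimage_norm_le hsurj
  -- S is bounded below
  have hTlow : ∀ y : K, ‖y‖ ≤ C^2 * ‖S y‖ := by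
    intro y
    obtain ⟨x, hx, hxn⟩ := hCy y
    have h1 : ‖y‖*‖y‖ ≤ (C*‖y‖) * ‖Tadj y‖ := by
      have e1 : ‖y‖*‖y‖ = ‖(inner A y y : A)‖ := by
        rw [← RightCStarModule.norm_sq_eq (A := A) (x := y)]; ring
      have e3 : (inner A y y : A) = inner A x (Tadj y) := by rw [← hadj, hx]
      rw [e1, e3]
      calc ‖(inner A x (Tadj y) : A)‖ ≤ ‖x‖ * ‖Tadj y‖ := RightCStarModule.norm_inner_le H
        _ ≤ (C*‖y‖) * ‖Tadj y‖ := mul_le_mul_of_nonneg_right hxn (norm_nonneg _)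
    have h2 : ‖Tadj y‖*‖Tadj y‖ ≤ ‖S y‖ * ‖y‖ := by
      have e2 : ‖Tadj y‖*‖Tadj y‖ = ‖(inner A (Tadj y) (Tadj y) : A)‖ := by
        rw [← RightCStarModule.norm_sq_eq (A := A) (x := Tadj y)]; ring
      rw [e2, ← hq]
      exact RightCStarModule.norm_inner_le K
    rcases eq_or_lt_of_le (norm_nonneg y) with hy0 | hy0
    · rw [← hy0]; positivity
    · have h3 : ‖y‖ ≤ C * ‖Tadj y‖ := by
        by_contra hcon
        push_neg at hcon
        nlinarith
      nlinarith [norm_nonneg (Tadj y), norm_nonneg (S y)]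
  -- S is self-adjoint
  have hSsa : ∀ u v : K, (inner A (S u) v : A) = inner A u (S v) := by
    intro u v
    have e1 : (inner A (S u) v : A) = inner A (Tadj u) (Tadj v) := hadj (Tadj u) v
    have e2 : (inner A u (S v) : A) = inner A (Tadj u) (Tadj v) := by
      calc (inner A u (S v) : A) = star (inner A (S v) u : A) :=
            (RightCStarModule.star_inner _ _).symm
        _ = star (inner A (Tadj v) (Tadj u) : A) := by
            rw [show (inner A (S v) u : A) = inner A (Tadj v) (Tadj u) from hadj (Tadj v) u]
        _ = inner A (Tadj u) (Tadj v) := RightCStarModule.star_inner _ _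
    rw [e1, e2]
  set δ : ℝ := (C^2)⁻¹ with hδ_def
  have hδpos : 0 < δ := by positivity
  -- bounded below along the imaginary axis, uniformly
  have hbb : ∀ (r : ℝ) (y : K), δ * ‖y‖ ≤ ‖(S - ((r : ℂ) * Complex.I) • 1) y‖ := by
    intro r y
    set μ : ℂ := (r : ℂ) * Complex.I with hμ_def
    have hμconj : star μ = -μ := by
      rw [hμ_def]
      simp [Complex.ext_iff]
    have happ : (S - μ • 1) y = S y - μ • y := by
      simp [ContinuousLinearMap.sub_apply, ContinuousLinearMap.smul_apply]
    set Q : A := (inner A (S y) y : A) with hQ_def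
    have hQsa : star Q = Q := by
      rw [hQ_def, hq]; exact RightCStarModule.star_inner _ _
    have hE : (inner A ((S - μ • 1) y) ((S - μ • 1) y) : A)
        = (inner A (S y) (S y) : A) + (r^2) • (inner A y y : A) := by
      rw [happ]
      simp only [RightCStarModule.inner_sub_right, RightCStarModule.inner_sub_left,
        RightCStarModule.inner_smul_right_complex, RightCStarModule.inner_smul_left_complex]
      have hyS : (inner A y (S y) : A) = Q := by
        rw [hQ_def, ← RightCStarModule.star_inner (S y) y, hQsa]
      rw [← hQ_def, hyS]
      have hcancel : star μ • Q + μ • Q = 0 := by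
        rw [hμconj, ← add_smul, neg_add_cancel, zero_smul]
      have hsq : μ • (star μ • (inner A y y : A)) = (r^2) • (inner A y y : A) := by
        rw [smul_smul]
        have hμμ : μ * star μ = ((r^2 : ℝ) : ℂ) := by
          rw [hμconj, hμ_def]
          push_cast
          ring_nf
          simp [Complex.I_sq]
        rw [hμμ]
        rw [show ((r^2 : ℝ) : ℂ) = algebraMap ℝ ℂ (r^2) from rfl, algebraMap_smul]
      rw [smul_sub, hsq]
      calc (inner A (S y) (S y) : A) - star μ • Q - (μ • Q - (r^2) • (inner A y y : A))
          = (inner A (S y) (S y) : A) + (r^2) • (inner A y y : A) - (star μ • Q + μ • Q) := by abel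
        _ = (inner A (S y) (S y) : A) + (r^2) • (inner A y y : A) := by rw [hcancel, sub_zero]
    have hle : ‖S y‖^2 ≤ ‖(S - μ • 1) y‖^2 := by
      rw [RightCStarModule.norm_sq_eq (A := A), RightCStarModule.norm_sq_eq (A := A), hE]
      refine CStarAlgebra.norm_le_norm_of_nonneg_of_le RightCStarModule.inner_self_nonneg ?_
      exact le_add_of_nonneg_right (smul_nonneg (sq_nonneg r) RightCStarModule.inner_self_nonneg)
    have h5 : ‖y‖ ≤ C^2 * ‖S y‖ := hTlow y
    have h6 : ‖S y‖ ≤ ‖(S - μ • 1) y‖ := by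
      nlinarith [norm_nonneg (S y), norm_nonneg ((S - μ • 1) y)]
    rw [hδ_def]
    rw [inv_mul_le_iff₀ (by positivity)]
    calc ‖y‖ ≤ C^2 * ‖S y‖ := h5
      _ ≤ C^2 * ‖(S - μ • 1) y‖ := mul_le_mul_of_nonneg_left h6 (by positivity)
  -- marching down the imaginary axis
  have step : ∀ (r r' : ℝ), |r' - r| ≤ δ/2 → IsUnit (S - ((r:ℂ) * Complex.I) • 1) →
      IsUnit (S - ((r':ℂ) * Complex.I) • 1) := by
    rintro r r' hrr ⟨u, hu⟩
    have hinv : ∀ z : K, ‖(↑u⁻¹ : K →L[ℂ] K) z‖ ≤ δ⁻¹ * ‖z‖ := by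
      intro z
      have h7 := hbb r ((↑u⁻¹ : K →L[ℂ] K) z)
      rw [← hu] at h7
      have h8 : (↑u : K →L[ℂ] K) ((↑u⁻¹ : K →L[ℂ] K) z) = z := by
        calc (↑u : K →L[ℂ] K) ((↑u⁻¹ : K →L[ℂ] K) z)
            = ((↑u : K →L[ℂ] K) * (↑u⁻¹ : K →L[ℂ] K)) z := rfl
          _ = z := by rw [u.mul_inv]; rfl
      rw [h8] at h7
      calc ‖(↑u⁻¹ : K →L[ℂ] K) z‖ ≤ δ⁻¹ * (δ * ‖(↑u⁻¹ : K →L[ℂ] K) z‖) := by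
            rw [← mul_assoc, inv_mul_cancel₀ hδpos.ne', one_mul]
        _ ≤ δ⁻¹ * ‖z‖ := mul_le_mul_of_nonneg_left h7 (by positivity)
    have hinvnorm : ‖(↑u⁻¹ : K →L[ℂ] K)‖ ≤ δ⁻¹ :=
      ContinuousLinearMap.opNorm_le_bound _ (by positivity) hinv
    set w : K →L[ℂ] K := (((r':ℂ) - r) * Complex.I) • (↑u⁻¹ : K →L[ℂ] K) with hw_def
    have hwnorm : ‖w‖ < 1 := by
      have h9 : ‖((r':ℂ) - r) * Complex.I‖ = |r' - r| := by
        rw [norm_mul, Complex.norm_I, mul_one]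
        rw [show ((r':ℂ) - r) = ((r' - r : ℝ) : ℂ) by push_cast; ring]
        rw [Complex.norm_real, Real.norm_eq_abs]
      calc ‖w‖ = ‖((r':ℂ) - r) * Complex.I‖ * ‖(↑u⁻¹ : K →L[ℂ] K)‖ := by
            rw [hw_def]; exact norm_smul (β := K →L[ℂ] K) _ _
        _ = |r' - r| * ‖(↑u⁻¹ : K →L[ℂ] K)‖ := by rw [h9]
        _ ≤ (δ/2) * δ⁻¹ := mul_le_mul hrr hinvnorm (norm_nonneg _) (by positivity)
        _ = 1/2 := by field_simp
        _ < 1 := by norm_num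
    set v : (K →L[ℂ] K)ˣ := Units.oneSub w hwnorm with hv_def
    refine ⟨u * v, ?_⟩
    have hvval : (v : K →L[ℂ] K) = 1 - w := rfl
    calc ((u * v : (K →L[ℂ] K)ˣ) : K →L[ℂ] K) = (↑u : K →L[ℂ] K) * (1 - w) := by
          rw [Units.val_mul, hvval]
      _ = (↑u : K →L[ℂ] K) - (↑u : K →L[ℂ] K) * w := by rw [mul_sub, mul_one]
      _ = (↑u : K →L[ℂ] K) - (((r':ℂ) - r) * Complex.I) • ((↑u : K →L[ℂ] K) * (↑u⁻¹ : K →L[ℂ] K)) := by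
          rw [hw_def, mul_smul_comm]
      _ = (↑u : K →L[ℂ] K) - (((r':ℂ) - r) * Complex.I) • 1 := by rw [u.mul_inv]
      _ = S - ((r':ℂ) * Complex.I) • 1 := by
          rw [hu]
          rw [sub_sub, ← add_smul]
          congr 1
          congr 1
          ring
  -- base point: far up the imaginary axis
  have base : IsUnit (S - ((‖S‖ + 1 : ℝ) * Complex.I : ℂ) • 1) := by
    set z : ℂ := ((‖S‖ + 1 : ℝ) : ℂ) * Complex.I with hz_def
    have hznorm : ‖z‖ = ‖S‖ + 1 := by
      rw [hz_def, norm_mul, Complex.norm_I, mul_one, Complex.norm_real,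
        Real.norm_eq_abs, abs_of_pos (by positivity)]
    have hzne : z ≠ 0 := by
      intro hcon
      rw [hcon, norm_zero] at hznorm
      have := norm_nonneg S
      linarith
    have hsmall : ‖z⁻¹ • S‖ < 1 := by
      have h9 : ‖z⁻¹ • S‖ = ‖z‖⁻¹ * ‖S‖ := by
        rw [show ‖z⁻¹ • S‖ = ‖z⁻¹‖ * ‖S‖ from norm_smul (β := K →L[ℂ] K) _ _, norm_inv]
      rw [h9, hznorm, inv_mul_lt_iff₀ (by positivity)]
      have := norm_nonneg S
      linarith
    set w : (K →L[ℂ] K)ˣ := Units.oneSub (z⁻¹ • S) hsmall with hw_def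
    have hwval : (w : K →L[ℂ] K) = 1 - z⁻¹ • S := rfl
    refine isUnit_iff_exists.mpr ⟨(-z)⁻¹ • (↑w⁻¹ : K →L[ℂ] K), ?_, ?_⟩
    · have hform : S - z • 1 = (-z) • (w : K →L[ℂ] K) := by
        rw [hwval, smul_sub, smul_smul]
        rw [show (-z) * z⁻¹ = -1 by field_simp]
        rw [neg_smul, neg_smul, one_smul, sub_neg_eq_add, neg_add_eq_sub]
      rw [hform, smul_mul_smul_comm, mul_inv_cancel₀ (neg_ne_zero.mpr hzne), w.mul_inv, one_smul]
    · have hform : S - z • 1 = (-z) • (w : K →L[ℂ] K) := by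
        rw [hwval, smul_sub, smul_smul]
        rw [show (-z) * z⁻¹ = -1 by field_simp]
        rw [neg_smul, neg_smul, one_smul, sub_neg_eq_add, neg_add_eq_sub]
      rw [hform, smul_mul_smul_comm, inv_mul_cancel₀ (neg_ne_zero.mpr hzne), w.inv_mul, one_smul]
  -- march to zero
  have march : ∀ n : ℕ, IsUnit (S - (((max (‖S‖ + 1 - n*(δ/2)) 0 : ℝ) : ℂ) * Complex.I) • 1) := by
    intro n
    induction n with
    | zero =>
      simpa [max_eq_left (by positivity : (0:ℝ) ≤ ‖S‖ + 1)] using base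
    | succ n ih =>
      refine step _ _ ?_ ih
      have := abs_max_sub_max_le_abs (‖S‖ + 1 - (n+1)*(δ/2)) (‖S‖ + 1 - n*(δ/2)) 0
      push_cast
      refine le_trans (by push_cast at this ⊢; exact this) ?_
      rw [show (‖S‖ + 1 - (n+1)*(δ/2)) - (‖S‖ + 1 - n*(δ/2)) = -(δ/2) by ring]
      rw [abs_neg, abs_of_pos (by positivity)]
  have hSunit : IsUnit S := by
    obtain ⟨n, hn⟩ := exists_nat_ge ((‖S‖ + 1) / (δ/2))
    have hzero : max (‖S‖ + 1 - n*(δ/2)) 0 = 0 := by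
      rw [max_eq_right]
      rw [div_le_iff₀ (by positivity)] at hn
      linarith
    have := march n
    rw [hzero] at this
    simpa using this
  obtain ⟨u, hu⟩ := hSunit
  set V : K →L[ℂ] K := (↑u⁻¹ : K →L[ℂ] K) with hV_def
  have hVS : ∀ z : K, V (S z) = z := by
    intro z
    calc V (S z) = (V * (↑u : K →L[ℂ] K)) z := by rw [hu]; rfl
      _ = z := by rw [hV_def, u.inv_mul]; rfl
  have hSV : ∀ z : K, S (V z) = z := by
    intro z
    calc S (V z) = ((↑u : K →L[ℂ] K) * V) z := by rw [hu]; rfl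
      _ = z := by rw [hV_def, u.mul_inv]; rfl
  have hVsa : ∀ w z : K, (inner A (V w) z : A) = inner A w (V z) := by
    intro w z
    calc (inner A (V w) z : A) = inner A (V w) (S (V z)) := by rw [hSV]
      _ = inner A (S (V w)) (V z) := (hSsa _ _).symm
      _ = inner A w (V z) := by rw [hSV]
  set R' : H →L[ℂ] K := V.comp T with hR'_def
  set R'adj : K →L[ℂ] H := Tadj.comp V with hR'adj_def
  have hadjR : ∀ (x : H) (z : K), (inner A (R' x) z : A) = inner A x (R'adj z) := by
    intro x z
    calc (inner A (R' x) z : A) = inner A (V (T x)) z := rfl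
      _ = inner A (T x) (V z) := hVsa _ _
      _ = inner A x (Tadj (V z)) := hadj _ _
      _ = inner A x (R'adj z) := rfl
  set c : ℝ := ‖R'adj‖ * ‖R'‖ with hc_def
  have hc : 0 ≤ c := mul_nonneg (norm_nonneg _) (norm_nonneg _)
  refine ⟨(c+1)⁻¹, by positivity, fun y => ?_⟩
  have hkey := my_lemP R' R'adj hadjR (Tadj y)
  have hRT : R' (Tadj y) = y := by
    calc R' (Tadj y) = V (T (Tadj y)) := rfl
      _ = V (S y) := rfl
      _ = y := hVS y
  rw [hRT] at hkey
  set Q : A := (inner A (Tadj y) (Tadj y) : A) with hQ_def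
  have hQpos : (0:A) ≤ Q := RightCStarModule.inner_self_nonneg
  calc (c+1)⁻¹ • (inner A y y : A) ≤ (c+1)⁻¹ • (c • Q) :=
        smul_le_smul_of_nonneg_left hkey (by positivity)
    _ = ((c+1)⁻¹ * c) • Q := by rw [smul_smul]
    _ ≤ Q := by
        have h30 : (0:ℝ) ≤ 1 - (c+1)⁻¹ * c := by
          rw [sub_nonneg, inv_mul_le_iff₀ (by positivity)]
          linarith
        have h31 : (0:A) ≤ (1 - (c+1)⁻¹ * c) • Q := smul_nonneg h30 hQpos
        rw [sub_smul, one_smul, sub_nonneg] at h31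
        exact h31

end main

/-- An adjointable map `T` between Hilbert C*-modules is surjective iff its adjoint `T*`
is bounded below with respect to the inner product: there is `m' > 0` with
`⟨T*y, T*y⟩ ≥ m'⟨y, y⟩` for all `y`. -/
theorem adjointable_surjective_iff_adjoint_bounded_below_inner
    {A H K : Type*} [NonUnitalCStarAlgebra A] [PartialOrder A] [StarOrderedRing A]
    [NormedAddCommGroup H] [NormedSpace ℂ H] [SMul Aᵐᵒᵖ H] [RightCStarModule A H] [CompleteSpace H]
    [NormedAddCommGroup K] [NormedSpace ℂ K] [SMul Aᵐᵒᵖ K] [RightCStarModule A K] [CompleteSpace K]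
    (T : H →L[ℂ] K) (Tadj : K →L[ℂ] H)
    (hadj : ∀ (x : H) (y : K), (inner A (T x) y : A) = inner A x (Tadj y)) :
    Function.Surjective T ↔
      ∃ m' : ℝ, 0 < m' ∧ ∀ y : K, m' • (inner A y y : A) ≤ (inner A (Tadj y) (Tadj y) : A) := by
  constructor
  · intro hsurj
    exact my_mp T Tadj hadj hsurj
  · rintro ⟨m, hm, hb⟩
    exact my_mpr T Tadj hadj m hm hb
end
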